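/- Define F(n,k) = ([n+1]/2) · binom_q(2n+1,n) · (1+q^{2k-n-1}) · q^{-C(n-2k+1,2)} / ([2k]^2 · binom_{q^2}(n,k)^2) and G(n,k) = -([3n-2k+5]/2) · binom_q(2n+1,n) · (1+q^{n+1}) · q^{-C(n-2k+3,2)} / ([2k]^2 · binom_{q^2}(n+1,k)^2). Then for all positive integers n and k with 1 ≤ k ≤ n, F(n+1,k) - F(n,k) = G(n,k+1) - G(n,k). -/

import Mathlib

open Polynomial Finset

noncomputable def q : RatFunc ℚ := RatFunc.X

/-- `qpoch a b m = (a;b)_m = ∏_{j=0}^{m-1} (1 - a b^j)`. -/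
noncomputable def qpoch (a b : RatFunc ℚ) (m : ℕ) : RatFunc ℚ :=
  ∏ j ∈ Finset.range m, (1 - a * b ^ j)

/-- The q-integer `[m] = (1-q^m)/(1-q)` for any integer `m`. -/
noncomputable def qint (m : ℤ) : RatFunc ℚ := (1 - q ^ m) / (1 - q)

/-- Gaussian binomial coefficient in base `b`. -/
noncomputable def qbin (b : RatFunc ℚ) (M N : ℕ) : RatFunc ℚ :=
  if N ≤ M then qpoch b b M / (qpoch b b N * qpoch b b (M - N)) else 0

/-- `C2 a = a(a-1)/2`. -/
def C2 (a : ℤ) : ℤ := a * (a - 1) / 2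

/-- The polynomial `[n] = 1 + q + ... + q^{n-1}` in `ℚ[q]`. -/
noncomputable def qnPoly (n : ℕ) : Polynomial ℚ := ∑ i ∈ Finset.range n, X ^ i

/-- Congruence of rational functions modulo a polynomial: the reduced numerator of the
difference is divisible by `P` and the reduced denominator is coprime to `P`. -/
def congrMod (x y : RatFunc ℚ) (P : Polynomial ℚ) : Prop :=
  P ∣ (x - y).num ∧ IsCoprime ((x - y).denom) P

noncomputable def F2 (n k : ℕ) : RatFunc ℚ :=
  (qint ((n : ℤ) + 1) / 2 * qbin q (2 * n + 1) n * (1 + q ^ (2 * (k : ℤ) - n - 1)) *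
      q ^ (-(C2 ((n : ℤ) - 2 * k + 1)))) /
    (qint (2 * (k : ℤ)) ^ 2 * qbin (q ^ 2) n k ^ 2)

noncomputable def G2 (n k : ℕ) : RatFunc ℚ :=
  -((qint (3 * (n : ℤ) - 2 * k + 5) / 2 * qbin q (2 * n + 1) n * (1 + q ^ ((n : ℤ) + 1)) *
      q ^ (-(C2 ((n : ℤ) - 2 * k + 3)))) /
    (qint (2 * (k : ℤ)) ^ 2 * qbin (q ^ 2) (n + 1) k ^ 2))


lemma q_ne_zero : q ≠ 0 := RatFunc.X_ne_zero

lemma q_pow_ne_one {m : ℕ} (hm : m ≠ 0) : (q ^ m : RatFunc ℚ) ≠ 1 := by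
  intro h
  have h2 : (Polynomial.X ^ m : ℚ[X]) = 1 := by
    apply IsFractionRing.injective (ℚ[X]) (RatFunc ℚ)
    simpa [q, map_pow] using h
  have := congrArg Polynomial.natDegree h2
  simp [Polynomial.natDegree_X_pow] at this
  exact hm this

lemma one_sub_q_pow_ne_zero {m : ℕ} (hm : m ≠ 0) : (1 - q ^ m : RatFunc ℚ) ≠ 0 :=
  sub_ne_zero.mpr fun h => q_pow_ne_one hm h.symm

lemma qpoch_succ (a b : RatFunc ℚ) (m : ℕ) :
    qpoch a b (m + 1) = qpoch a b m * (1 - a * b ^ m) := Finset.prod_range_succ _ m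

lemma qpoch_q_pow_ne_zero {s : ℕ} (hs : s ≠ 0) (m : ℕ) : qpoch (q ^ s) (q ^ s) m ≠ 0 := by
  unfold qpoch
  apply Finset.prod_ne_zero_iff.mpr
  intro j _
  have h1 : (q:RatFunc ℚ) ^ s * (q ^ s) ^ j = q ^ (s * (j + 1)) := by
    rw [← pow_mul, ← pow_add]; congr 1; ring
  rw [h1]
  exact one_sub_q_pow_ne_zero (by positivity)

lemma q_zpow_nat (m : ℤ) (a : ℕ) (h : m = a) : (q : RatFunc ℚ) ^ m = q ^ a := by
  rw [h, zpow_natCast]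

lemma q_zpow_eq (m : ℤ) (a b : ℕ) (h : m + b = a) : (q : RatFunc ℚ) ^ m = q ^ a / q ^ b := by
  rw [eq_div_iff (pow_ne_zero _ q_ne_zero), ← zpow_natCast q a, ← zpow_natCast q b,
    ← zpow_add₀ q_ne_zero, h]

lemma q_pow_split (k m a b c : ℕ) :
    (q : RatFunc ℚ) ^ (a * k + b * m + c) = (q ^ k) ^ a * (q ^ m) ^ b * q ^ c := by
  rw [pow_add, pow_add, mul_comm a k, mul_comm b m, pow_mul, pow_mul]

lemma C2_succ (a : ℤ) : C2 (a + 1) = C2 a + a := by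
  unfold C2
  have h1 : 2 ∣ a * (a - 1) := by
    rcases Int.even_or_odd a with h | h
    · exact Dvd.dvd.mul_right h.two_dvd _
    · obtain ⟨c, hc⟩ := h
      exact Dvd.dvd.mul_left ⟨c, by omega⟩ _
  have h3 : (a + 1) * (a + 1 - 1) = a * (a - 1) + 2 * a := by ring
  omega

noncomputable def Phi (n k : ℕ) : RatFunc ℚ :=
  q ^ (-(C2 ((n : ℤ) - 2 * k + 1))) * qpoch q q (2 * n + 1) * qpoch (q ^ 2) (q ^ 2) k ^ 2 *
      qpoch (q ^ 2) (q ^ 2) (n - k) ^ 2 * (1 - q) /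
    (2 * qpoch q q n ^ 2 * (1 - (q ^ k) ^ 2) ^ 2 * qpoch (q ^ 2) (q ^ 2) n ^ 2)

lemma rfq_two_ne_zero : (2 : RatFunc ℚ) ≠ 0 := by
  have h : algebraMap ℚ[X] (RatFunc ℚ) 2 ≠ 0 := fun hh => by
    have h3 : (2 : ℚ[X]) = 0 := by
      apply IsFractionRing.injective (ℚ[X]) (RatFunc ℚ)
      rw [hh, map_zero]
    norm_num at h3
  rwa [map_ofNat] at h

lemma div_eq_div_of (a b c d : RatFunc ℚ) (hb : b ≠ 0) (hd : d ≠ 0)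
    (h : a * d = c * b) : a / b = c / d := by
  rw [div_eq_div_iff hb hd, h]

set_option maxHeartbeats 2000000 in
lemma e0 (n k : ℕ) (hk : 1 ≤ k) (hkn : k ≤ n) :
    F2 n k = Phi n k * ((q * q ^ (n - k) + q ^ k) / (q * q ^ (n - k))) := by
  have hq := q_ne_zero
  have hQ1 : (1 - q : RatFunc ℚ) ≠ 0 := by
    have := one_sub_q_pow_ne_zero (m := 1) one_ne_zero; rwa [pow_one] at this
  have hY : (q : RatFunc ℚ) ^ k ≠ 0 := pow_ne_zero _ hq
  have hZ : (q : RatFunc ℚ) ^ (n - k) ≠ 0 := pow_ne_zero _ hq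
  have hA : qpoch q q n ≠ 0 := by
    have := qpoch_q_pow_ne_zero (s := 1) one_ne_zero n; rwa [pow_one] at this
  have hP : qpoch q q (2 * n + 1) ≠ 0 := by
    have := qpoch_q_pow_ne_zero (s := 1) one_ne_zero (2 * n + 1); rwa [pow_one] at this
  have hB : qpoch (q ^ 2) (q ^ 2) n ≠ 0 := qpoch_q_pow_ne_zero two_ne_zero n
  have hC : qpoch (q ^ 2) (q ^ 2) k ≠ 0 := qpoch_q_pow_ne_zero two_ne_zero k
  have hD : qpoch (q ^ 2) (q ^ 2) (n - k) ≠ 0 := qpoch_q_pow_ne_zero two_ne_zero (n - k)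
  have hsn : (q : RatFunc ℚ) ^ n = q ^ k * q ^ (n - k) := by
    rw [← pow_add]; congr 1; omega
  have hE1 : (1 : RatFunc ℚ) - q * (q ^ k * q ^ (n - k)) ≠ 0 := by
    have := one_sub_q_pow_ne_zero (m := n + 1) (by omega)
    rwa [pow_succ', hsn] at this
  have hY2 : (1 : RatFunc ℚ) - (q ^ k) ^ 2 ≠ 0 := by
    have := one_sub_q_pow_ne_zero (m := 2 * k) (by omega)
    rwa [pow_mul'] at this
  unfold F2 Phi qint qbin
  rw [if_pos (by omega : n ≤ 2 * n + 1), if_pos hkn,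
    show 2 * n + 1 - n = n + 1 from by omega, qpoch_succ q q n,
    q_zpow_nat ((n : ℤ) + 1) (n + 1) (by push_cast; ring),
    q_zpow_nat (2 * (k : ℤ)) (2 * k) (by push_cast; ring),
    q_zpow_eq (2 * (k : ℤ) - n - 1) (2 * k) (n + 1) (by push_cast; ring),
    show (q : RatFunc ℚ) ^ (n + 1) = q * (q ^ k * q ^ (n - k)) from by rw [pow_succ', hsn],
    show (q : RatFunc ℚ) ^ (2 * k) = (q ^ k) ^ 2 from pow_mul' q 2 k, hsn]
  have hw0 : q ^ (-(C2 ((n : ℤ) - 2 * k + 1))) ≠ 0 := zpow_ne_zero _ hq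
  generalize q ^ (-(C2 ((n : ℤ) - 2 * k + 1))) = w at hw0 ⊢
  generalize (q : RatFunc ℚ) ^ k = Y at hY hE1 hY2 ⊢
  generalize (q : RatFunc ℚ) ^ (n - k) = Z at hZ hE1 ⊢
  generalize (1 : RatFunc ℚ) - q * (Y * Z) = E1 at hE1 ⊢
  generalize (1 : RatFunc ℚ) - Y ^ 2 = Y2 at hY2 ⊢
  generalize qpoch q q n = A at hA ⊢
  generalize qpoch q q (2 * n + 1) = P at hP ⊢
  generalize qpoch (q ^ 2) (q ^ 2) n = B at hB ⊢
  generalize qpoch (q ^ 2) (q ^ 2) k = C at hC ⊢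
  generalize qpoch (q ^ 2) (q ^ 2) (n - k) = D at hD ⊢
  have h2 : (2 : RatFunc ℚ) ≠ 0 := rfq_two_ne_zero
  field_simp [hq, hQ1, hY, hZ, hA, hP, hB, hC, hD, hE1, hY2, hw0, h2]

set_option maxHeartbeats 4000000 in
lemma e1 (n k : ℕ) (hk : 1 ≤ k) (hkn : k ≤ n) :
    F2 (n + 1) k = Phi n k *
      (q ^ k * (q ^ 2 * q ^ (n - k) + q ^ k) * (1 - q ^ 3 * ((q ^ k) ^ 2 * (q ^ (n - k)) ^ 2)) *
          (1 - q ^ 2 * (q ^ (n - k)) ^ 2) ^ 2 /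
        (q ^ 3 * (q ^ (n - k)) ^ 2 * (1 - q * (q ^ k * q ^ (n - k))) ^ 2 *
          (1 - q ^ 2 * ((q ^ k) ^ 2 * (q ^ (n - k)) ^ 2)))) := by
  have hq := q_ne_zero
  have hQ1 : (1 - q : RatFunc ℚ) ≠ 0 := by
    have := one_sub_q_pow_ne_zero (m := 1) one_ne_zero; rwa [pow_one] at this
  have hY : (q : RatFunc ℚ) ^ k ≠ 0 := pow_ne_zero _ hq
  have hZ : (q : RatFunc ℚ) ^ (n - k) ≠ 0 := pow_ne_zero _ hq
  have hA : qpoch q q n ≠ 0 := by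
    have := qpoch_q_pow_ne_zero (s := 1) one_ne_zero n; rwa [pow_one] at this
  have hP : qpoch q q (2 * n + 1) ≠ 0 := by
    have := qpoch_q_pow_ne_zero (s := 1) one_ne_zero (2 * n + 1); rwa [pow_one] at this
  have hB : qpoch (q ^ 2) (q ^ 2) n ≠ 0 := qpoch_q_pow_ne_zero two_ne_zero n
  have hC : qpoch (q ^ 2) (q ^ 2) k ≠ 0 := qpoch_q_pow_ne_zero two_ne_zero k
  have hD : qpoch (q ^ 2) (q ^ 2) (n - k) ≠ 0 := qpoch_q_pow_ne_zero two_ne_zero (n - k)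
  have hsn : (q : RatFunc ℚ) ^ n = q ^ k * q ^ (n - k) := by
    rw [← pow_add]; congr 1; omega
  have hE1 : (1 : RatFunc ℚ) - q * (q ^ k * q ^ (n - k)) ≠ 0 := by
    have := one_sub_q_pow_ne_zero (m := n + 1) (by omega)
    rwa [pow_succ', hsn] at this
  have hE2 : (1 : RatFunc ℚ) - q ^ 2 * (q ^ k * q ^ (n - k)) ≠ 0 := by
    have := one_sub_q_pow_ne_zero (m := n + 2) (by omega)
    have hx : (q : RatFunc ℚ) ^ (n + 2) = q ^ 2 * (q ^ k * q ^ (n - k)) := by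
      rw [show n + 2 = 1 * k + 1 * (n - k) + 2 from by omega, q_pow_split k (n - k) 1 1 2]; ring
    rwa [hx] at this
  have hE3 : (1 : RatFunc ℚ) - q ^ 2 * ((q ^ k) ^ 2 * (q ^ (n - k)) ^ 2) ≠ 0 := by
    have := one_sub_q_pow_ne_zero (m := 2 * n + 2) (by omega)
    have hx : (q : RatFunc ℚ) ^ (2 * n + 2) = q ^ 2 * ((q ^ k) ^ 2 * (q ^ (n - k)) ^ 2) := by
      rw [show 2 * n + 2 = 2 * k + 2 * (n - k) + 2 from by omega, q_pow_split k (n - k) 2 2 2]; ring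
    rwa [hx] at this
  have hE5 : (1 : RatFunc ℚ) - q ^ 2 * (q ^ (n - k)) ^ 2 ≠ 0 := by
    have := one_sub_q_pow_ne_zero (m := 2 * (n - k) + 2) (by omega)
    have hx : (q : RatFunc ℚ) ^ (2 * (n - k) + 2) = q ^ 2 * (q ^ (n - k)) ^ 2 := by
      rw [show 2 * (n - k) + 2 = 0 * k + 2 * (n - k) + 2 from by omega, q_pow_split k (n - k) 0 2 2]; ring
    rwa [hx] at this
  have hY2 : (1 : RatFunc ℚ) - (q ^ k) ^ 2 ≠ 0 := by
    have := one_sub_q_pow_ne_zero (m := 2 * k) (by omega)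
    rwa [pow_mul'] at this
  unfold F2 Phi qint qbin
  rw [if_pos (by omega : n + 1 ≤ 2 * (n + 1) + 1), if_pos (by omega : k ≤ n + 1),
    show 2 * (n + 1) + 1 - (n + 1) = n + 1 + 1 from by omega,
    show 2 * (n + 1) + 1 = 2 * n + 1 + 1 + 1 from by omega,
    show n + 1 - k = (n - k) + 1 from by omega,
    qpoch_succ q q (2 * n + 1 + 1), qpoch_succ q q (2 * n + 1),
    qpoch_succ q q (n + 1), qpoch_succ q q n,
    qpoch_succ (q ^ 2) (q ^ 2) n, qpoch_succ (q ^ 2) (q ^ 2) (n - k)]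
  rw [show (1 : RatFunc ℚ) - q * q ^ (2 * n + 1 + 1) =
        1 - q ^ 3 * ((q ^ k) ^ 2 * (q ^ (n - k)) ^ 2) from by
      rw [show 2 * n + 1 + 1 = 2 * k + 2 * (n - k) + 2 from by omega, q_pow_split k (n - k) 2 2 2]; ring,
    show (1 : RatFunc ℚ) - q * q ^ (2 * n + 1) =
        1 - q ^ 2 * ((q ^ k) ^ 2 * (q ^ (n - k)) ^ 2) from by
      rw [show 2 * n + 1 = 2 * k + 2 * (n - k) + 1 from by omega, q_pow_split k (n - k) 2 2 1]; ring,
    show (1 : RatFunc ℚ) - q * q ^ (n + 1) = 1 - q ^ 2 * (q ^ k * q ^ (n - k)) from by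
      rw [pow_succ', hsn]; ring,
    show (1 : RatFunc ℚ) - q ^ 2 * (q ^ 2) ^ n = 1 - q ^ 2 * ((q ^ k) ^ 2 * (q ^ (n - k)) ^ 2) from by
      rw [← pow_mul, show 2 * n = 2 * k + 2 * (n - k) + 0 from by omega, q_pow_split k (n - k) 2 2 0]; ring,
    show (1 : RatFunc ℚ) - q ^ 2 * (q ^ 2) ^ (n - k) = 1 - q ^ 2 * (q ^ (n - k)) ^ 2 from by
      rw [← pow_mul, mul_comm 2 (n - k), pow_mul]]
  rw [q_zpow_nat (((n + 1 : ℕ) : ℤ) + 1) (n + 1 + 1) (by push_cast; ring),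
    q_zpow_nat (2 * (k : ℤ)) (2 * k) (by push_cast; ring),
    q_zpow_eq (2 * (k : ℤ) - ((n + 1 : ℕ) : ℤ) - 1) (2 * k) (n + 1 + 1) (by push_cast; ring),
    show ((n + 1 : ℕ) : ℤ) - 2 * (k : ℤ) + 1 = ((n : ℤ) - 2 * k + 1) + 1 from by push_cast; ring,
    C2_succ, neg_add, zpow_add₀ q_ne_zero,
    q_zpow_eq (-((n : ℤ) - 2 * (k : ℤ) + 1)) (2 * k) (n + 1) (by push_cast; ring)]
  rw [show (q : RatFunc ℚ) ^ (n + 1 + 1) = q ^ 2 * (q ^ k * q ^ (n - k)) from by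
      rw [show n + 1 + 1 = 1 * k + 1 * (n - k) + 2 from by omega, q_pow_split k (n - k) 1 1 2]; ring,
    show (q : RatFunc ℚ) ^ (n + 1) = q * (q ^ k * q ^ (n - k)) from by rw [pow_succ', hsn],
    show (q : RatFunc ℚ) ^ (2 * k) = (q ^ k) ^ 2 from pow_mul' q 2 k, hsn]
  have hw0 : q ^ (-(C2 ((n : ℤ) - 2 * k + 1))) ≠ 0 := zpow_ne_zero _ hq
  generalize q ^ (-(C2 ((n : ℤ) - 2 * k + 1))) = w at hw0 ⊢
  generalize (q : RatFunc ℚ) ^ k = Y at hY hE1 hE2 hE3 hY2 ⊢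
  generalize (q : RatFunc ℚ) ^ (n - k) = Z at hZ hE1 hE2 hE3 hE5 ⊢
  generalize (1 : RatFunc ℚ) - q * (Y * Z) = E1 at hE1 ⊢
  generalize (1 : RatFunc ℚ) - q ^ 2 * (Y * Z) = E2 at hE2 ⊢
  generalize (1 : RatFunc ℚ) - q ^ 2 * (Y ^ 2 * Z ^ 2) = E3 at hE3 ⊢
  generalize (1 : RatFunc ℚ) - q ^ 2 * Z ^ 2 = E5 at hE5 ⊢
  generalize (1 : RatFunc ℚ) - Y ^ 2 = Y2 at hY2 ⊢
  generalize qpoch q q n = A at hA ⊢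
  generalize qpoch q q (2 * n + 1) = P at hP ⊢
  generalize qpoch (q ^ 2) (q ^ 2) n = B at hB ⊢
  generalize qpoch (q ^ 2) (q ^ 2) k = C at hC ⊢
  generalize qpoch (q ^ 2) (q ^ 2) (n - k) = D at hD ⊢
  have h2 : (2 : RatFunc ℚ) ≠ 0 := rfq_two_ne_zero
  field_simp [hq, hQ1, hY, hZ, hA, hP, hB, hC, hD, hE1, hE2, hE3, hE5, hY2, hw0, h2]

set_option maxHeartbeats 4000000 in
lemma e2 (n k : ℕ) (hk : 1 ≤ k) (hkn : k ≤ n) :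
    G2 n k = Phi n k *
      (-((q ^ k) ^ 2 * (1 - q ^ 5 * (q ^ k * (q ^ (n - k)) ^ 3)) * (1 + q * (q ^ k * q ^ (n - k))) *
          (1 - q ^ 2 * (q ^ (n - k)) ^ 2) ^ 2 /
        (q ^ 3 * (q ^ (n - k)) ^ 2 * (1 - q * (q ^ k * q ^ (n - k))) *
          (1 - q ^ 2 * ((q ^ k) ^ 2 * (q ^ (n - k)) ^ 2)) ^ 2))) := by
  have hq := q_ne_zero
  have hQ1 : (1 - q : RatFunc ℚ) ≠ 0 := by
    have := one_sub_q_pow_ne_zero (m := 1) one_ne_zero; rwa [pow_one] at this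
  have hY : (q : RatFunc ℚ) ^ k ≠ 0 := pow_ne_zero _ hq
  have hZ : (q : RatFunc ℚ) ^ (n - k) ≠ 0 := pow_ne_zero _ hq
  have hA : qpoch q q n ≠ 0 := by
    have := qpoch_q_pow_ne_zero (s := 1) one_ne_zero n; rwa [pow_one] at this
  have hP : qpoch q q (2 * n + 1) ≠ 0 := by
    have := qpoch_q_pow_ne_zero (s := 1) one_ne_zero (2 * n + 1); rwa [pow_one] at this
  have hB : qpoch (q ^ 2) (q ^ 2) n ≠ 0 := qpoch_q_pow_ne_zero two_ne_zero n
  have hC : qpoch (q ^ 2) (q ^ 2) k ≠ 0 := qpoch_q_pow_ne_zero two_ne_zero k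
  have hD : qpoch (q ^ 2) (q ^ 2) (n - k) ≠ 0 := qpoch_q_pow_ne_zero two_ne_zero (n - k)
  have hsn : (q : RatFunc ℚ) ^ n = q ^ k * q ^ (n - k) := by
    rw [← pow_add]; congr 1; omega
  have hE1 : (1 : RatFunc ℚ) - q * (q ^ k * q ^ (n - k)) ≠ 0 := by
    have := one_sub_q_pow_ne_zero (m := n + 1) (by omega)
    rwa [pow_succ', hsn] at this
  have hE3 : (1 : RatFunc ℚ) - q ^ 2 * ((q ^ k) ^ 2 * (q ^ (n - k)) ^ 2) ≠ 0 := by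
    have := one_sub_q_pow_ne_zero (m := 2 * n + 2) (by omega)
    have hx : (q : RatFunc ℚ) ^ (2 * n + 2) = q ^ 2 * ((q ^ k) ^ 2 * (q ^ (n - k)) ^ 2) := by
      rw [show 2 * n + 2 = 2 * k + 2 * (n - k) + 2 from by omega, q_pow_split k (n - k) 2 2 2]; ring
    rwa [hx] at this
  have hE5 : (1 : RatFunc ℚ) - q ^ 2 * (q ^ (n - k)) ^ 2 ≠ 0 := by
    have := one_sub_q_pow_ne_zero (m := 2 * (n - k) + 2) (by omega)
    have hx : (q : RatFunc ℚ) ^ (2 * (n - k) + 2) = q ^ 2 * (q ^ (n - k)) ^ 2 := by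
      rw [show 2 * (n - k) + 2 = 0 * k + 2 * (n - k) + 2 from by omega, q_pow_split k (n - k) 0 2 2]; ring
    rwa [hx] at this
  have hY2 : (1 : RatFunc ℚ) - (q ^ k) ^ 2 ≠ 0 := by
    have := one_sub_q_pow_ne_zero (m := 2 * k) (by omega)
    rwa [pow_mul'] at this
  unfold G2 Phi qint qbin
  rw [if_pos (by omega : n ≤ 2 * n + 1), if_pos (by omega : k ≤ n + 1),
    show 2 * n + 1 - n = n + 1 from by omega,
    show n + 1 - k = (n - k) + 1 from by omega,
    qpoch_succ q q n,
    qpoch_succ (q ^ 2) (q ^ 2) n, qpoch_succ (q ^ 2) (q ^ 2) (n - k)]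
  rw [show (1 : RatFunc ℚ) - q ^ 2 * (q ^ 2) ^ n = 1 - q ^ 2 * ((q ^ k) ^ 2 * (q ^ (n - k)) ^ 2) from by
      rw [← pow_mul, show 2 * n = 2 * k + 2 * (n - k) + 0 from by omega, q_pow_split k (n - k) 2 2 0]; ring,
    show (1 : RatFunc ℚ) - q ^ 2 * (q ^ 2) ^ (n - k) = 1 - q ^ 2 * (q ^ (n - k)) ^ 2 from by
      rw [← pow_mul, mul_comm 2 (n - k), pow_mul]]
  rw [q_zpow_nat (3 * (n : ℤ) - 2 * (k : ℤ) + 5) (1 * k + 3 * (n - k) + 5) (by push_cast; omega),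
    q_pow_split k (n - k) 1 3 5,
    q_zpow_nat ((n : ℤ) + 1) (n + 1) (by push_cast; ring),
    q_zpow_nat (2 * (k : ℤ)) (2 * k) (by push_cast; ring),
    show (n : ℤ) - 2 * (k : ℤ) + 3 = (((n : ℤ) - 2 * k + 1) + 1) + 1 from by ring,
    C2_succ, C2_succ, neg_add, neg_add, zpow_add₀ q_ne_zero, zpow_add₀ q_ne_zero,
    q_zpow_eq (-((n : ℤ) - 2 * (k : ℤ) + 1)) (2 * k) (n + 1) (by push_cast; ring),
    q_zpow_eq (-(((n : ℤ) - 2 * (k : ℤ) + 1) + 1)) (2 * k) (n + 1 + 1) (by push_cast; ring)]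
  rw [show (q : RatFunc ℚ) ^ (n + 1 + 1) = q ^ 2 * (q ^ k * q ^ (n - k)) from by
      rw [show n + 1 + 1 = 1 * k + 1 * (n - k) + 2 from by omega, q_pow_split k (n - k) 1 1 2]; ring,
    show (q : RatFunc ℚ) ^ (n + 1) = q * (q ^ k * q ^ (n - k)) from by rw [pow_succ', hsn],
    show (q : RatFunc ℚ) ^ (2 * k) = (q ^ k) ^ 2 from pow_mul' q 2 k, hsn]
  have hw0 : q ^ (-(C2 ((n : ℤ) - 2 * k + 1))) ≠ 0 := zpow_ne_zero _ hq
  generalize q ^ (-(C2 ((n : ℤ) - 2 * k + 1))) = w at hw0 ⊢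
  generalize (q : RatFunc ℚ) ^ k = Y at hY hE1 hE3 hY2 ⊢
  generalize (q : RatFunc ℚ) ^ (n - k) = Z at hZ hE1 hE3 hE5 ⊢
  generalize (1 : RatFunc ℚ) - q * (Y * Z) = E1 at hE1 ⊢
  generalize (1 : RatFunc ℚ) - q ^ 2 * (Y ^ 2 * Z ^ 2) = E3 at hE3 ⊢
  generalize (1 : RatFunc ℚ) - q ^ 2 * Z ^ 2 = E5 at hE5 ⊢
  generalize (1 : RatFunc ℚ) - Y ^ 2 = Y2 at hY2 ⊢
  generalize qpoch q q n = A at hA ⊢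
  generalize qpoch q q (2 * n + 1) = P at hP ⊢
  generalize qpoch (q ^ 2) (q ^ 2) n = B at hB ⊢
  generalize qpoch (q ^ 2) (q ^ 2) k = C at hC ⊢
  generalize qpoch (q ^ 2) (q ^ 2) (n - k) = D at hD ⊢
  have h2 : (2 : RatFunc ℚ) ≠ 0 := rfq_two_ne_zero
  field_simp [hq, hQ1, hY, hZ, hA, hP, hB, hC, hD, hE1, hE3, hE5, hY2, hw0, h2]

set_option maxHeartbeats 4000000 in
lemma e3 (n k : ℕ) (hk : 1 ≤ k) (hkn : k ≤ n) :
    G2 n (k + 1) = Phi n k *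
      (-((1 - (q ^ k) ^ 2) ^ 2 * (1 - q ^ 3 * (q ^ k * (q ^ (n - k)) ^ 3)) *
          (1 + q * (q ^ k * q ^ (n - k))) /
        ((1 - q * (q ^ k * q ^ (n - k))) *
          (1 - q ^ 2 * ((q ^ k) ^ 2 * (q ^ (n - k)) ^ 2)) ^ 2))) := by
  have hq := q_ne_zero
  have hQ1 : (1 - q : RatFunc ℚ) ≠ 0 := by
    have := one_sub_q_pow_ne_zero (m := 1) one_ne_zero; rwa [pow_one] at this
  have hY : (q : RatFunc ℚ) ^ k ≠ 0 := pow_ne_zero _ hq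
  have hZ : (q : RatFunc ℚ) ^ (n - k) ≠ 0 := pow_ne_zero _ hq
  have hA : qpoch q q n ≠ 0 := by
    have := qpoch_q_pow_ne_zero (s := 1) one_ne_zero n; rwa [pow_one] at this
  have hP : qpoch q q (2 * n + 1) ≠ 0 := by
    have := qpoch_q_pow_ne_zero (s := 1) one_ne_zero (2 * n + 1); rwa [pow_one] at this
  have hB : qpoch (q ^ 2) (q ^ 2) n ≠ 0 := qpoch_q_pow_ne_zero two_ne_zero n
  have hC : qpoch (q ^ 2) (q ^ 2) k ≠ 0 := qpoch_q_pow_ne_zero two_ne_zero k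
  have hD : qpoch (q ^ 2) (q ^ 2) (n - k) ≠ 0 := qpoch_q_pow_ne_zero two_ne_zero (n - k)
  have hsn : (q : RatFunc ℚ) ^ n = q ^ k * q ^ (n - k) := by
    rw [← pow_add]; congr 1; omega
  have hE1 : (1 : RatFunc ℚ) - q * (q ^ k * q ^ (n - k)) ≠ 0 := by
    have := one_sub_q_pow_ne_zero (m := n + 1) (by omega)
    rwa [pow_succ', hsn] at this
  have hE3 : (1 : RatFunc ℚ) - q ^ 2 * ((q ^ k) ^ 2 * (q ^ (n - k)) ^ 2) ≠ 0 := by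
    have := one_sub_q_pow_ne_zero (m := 2 * n + 2) (by omega)
    have hx : (q : RatFunc ℚ) ^ (2 * n + 2) = q ^ 2 * ((q ^ k) ^ 2 * (q ^ (n - k)) ^ 2) := by
      rw [show 2 * n + 2 = 2 * k + 2 * (n - k) + 2 from by omega, q_pow_split k (n - k) 2 2 2]; ring
    rwa [hx] at this
  have hE6 : (1 : RatFunc ℚ) - q ^ 2 * (q ^ k) ^ 2 ≠ 0 := by
    have := one_sub_q_pow_ne_zero (m := 2 * k + 2) (by omega)
    have hx : (q : RatFunc ℚ) ^ (2 * k + 2) = q ^ 2 * (q ^ k) ^ 2 := by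
      rw [pow_add, pow_mul']; ring
    rwa [hx] at this
  have hY2 : (1 : RatFunc ℚ) - (q ^ k) ^ 2 ≠ 0 := by
    have := one_sub_q_pow_ne_zero (m := 2 * k) (by omega)
    rwa [pow_mul'] at this
  unfold G2 Phi qint qbin
  rw [if_pos (by omega : n ≤ 2 * n + 1), if_pos (by omega : k + 1 ≤ n + 1),
    show 2 * n + 1 - n = n + 1 from by omega,
    show n + 1 - (k + 1) = n - k from by omega,
    qpoch_succ q q n,
    qpoch_succ (q ^ 2) (q ^ 2) n, qpoch_succ (q ^ 2) (q ^ 2) k]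
  rw [show (1 : RatFunc ℚ) - q ^ 2 * (q ^ 2) ^ n = 1 - q ^ 2 * ((q ^ k) ^ 2 * (q ^ (n - k)) ^ 2) from by
      rw [← pow_mul, show 2 * n = 2 * k + 2 * (n - k) + 0 from by omega, q_pow_split k (n - k) 2 2 0]; ring,
    show (1 : RatFunc ℚ) - q ^ 2 * (q ^ 2) ^ k = 1 - q ^ 2 * (q ^ k) ^ 2 from by
      rw [← pow_mul, mul_comm 2 k, pow_mul]]
  rw [q_zpow_nat (3 * (n : ℤ) - 2 * ((k + 1 : ℕ) : ℤ) + 5) (1 * k + 3 * (n - k) + 3) (by push_cast; omega),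
    q_pow_split k (n - k) 1 3 3,
    q_zpow_nat ((n : ℤ) + 1) (n + 1) (by push_cast; ring),
    q_zpow_nat (2 * ((k + 1 : ℕ) : ℤ)) (2 * k + 2) (by push_cast; ring),
    show (q : RatFunc ℚ) ^ (2 * k + 2) = q ^ 2 * (q ^ k) ^ 2 from by rw [pow_add, pow_mul']; ring,
    show (n : ℤ) - 2 * ((k + 1 : ℕ) : ℤ) + 3 = (n : ℤ) - 2 * (k : ℤ) + 1 from by push_cast; ring]
  rw [show (q : RatFunc ℚ) ^ (n + 1) = q * (q ^ k * q ^ (n - k)) from by rw [pow_succ', hsn], hsn]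
  have hw0 : q ^ (-(C2 ((n : ℤ) - 2 * k + 1))) ≠ 0 := zpow_ne_zero _ hq
  generalize q ^ (-(C2 ((n : ℤ) - 2 * k + 1))) = w at hw0 ⊢
  generalize (q : RatFunc ℚ) ^ k = Y at hY hE1 hE3 hE6 hY2 ⊢
  generalize (q : RatFunc ℚ) ^ (n - k) = Z at hZ hE1 hE3 ⊢
  generalize (1 : RatFunc ℚ) - q * (Y * Z) = E1 at hE1 ⊢
  generalize (1 : RatFunc ℚ) - q ^ 2 * (Y ^ 2 * Z ^ 2) = E3 at hE3 ⊢
  generalize (1 : RatFunc ℚ) - q ^ 2 * Y ^ 2 = E6 at hE6 ⊢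
  generalize (1 : RatFunc ℚ) - Y ^ 2 = Y2 at hY2 ⊢
  generalize qpoch q q n = A at hA ⊢
  generalize qpoch q q (2 * n + 1) = P at hP ⊢
  generalize qpoch (q ^ 2) (q ^ 2) n = B at hB ⊢
  generalize qpoch (q ^ 2) (q ^ 2) k = C at hC ⊢
  generalize qpoch (q ^ 2) (q ^ 2) (n - k) = D at hD ⊢
  have h2 : (2 : RatFunc ℚ) ≠ 0 := rfq_two_ne_zero
  field_simp [hq, hQ1, hY, hZ, hA, hP, hB, hC, hD, hE1, hE3, hE6, hY2, hw0, h2]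

set_option maxHeartbeats 8000000 in
lemma key_id (n k : ℕ) (hk : 1 ≤ k) (hkn : k ≤ n) :
    q ^ k * (q ^ 2 * q ^ (n - k) + q ^ k) * (1 - q ^ 3 * ((q ^ k) ^ 2 * (q ^ (n - k)) ^ 2)) *
        (1 - q ^ 2 * (q ^ (n - k)) ^ 2) ^ 2 /
      (q ^ 3 * (q ^ (n - k)) ^ 2 * (1 - q * (q ^ k * q ^ (n - k))) ^ 2 *
        (1 - q ^ 2 * ((q ^ k) ^ 2 * (q ^ (n - k)) ^ 2)))
    - (q * q ^ (n - k) + q ^ k) / (q * q ^ (n - k))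
    = -((1 - (q ^ k) ^ 2) ^ 2 * (1 - q ^ 3 * (q ^ k * (q ^ (n - k)) ^ 3)) *
          (1 + q * (q ^ k * q ^ (n - k))) /
        ((1 - q * (q ^ k * q ^ (n - k))) * (1 - q ^ 2 * ((q ^ k) ^ 2 * (q ^ (n - k)) ^ 2)) ^ 2))
    - -((q ^ k) ^ 2 * (1 - q ^ 5 * (q ^ k * (q ^ (n - k)) ^ 3)) * (1 + q * (q ^ k * q ^ (n - k))) *
          (1 - q ^ 2 * (q ^ (n - k)) ^ 2) ^ 2 /
        (q ^ 3 * (q ^ (n - k)) ^ 2 * (1 - q * (q ^ k * q ^ (n - k))) *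
          (1 - q ^ 2 * ((q ^ k) ^ 2 * (q ^ (n - k)) ^ 2)) ^ 2)) := by
  have hq := q_ne_zero
  have hY : (q : RatFunc ℚ) ^ k ≠ 0 := pow_ne_zero _ hq
  have hZ : (q : RatFunc ℚ) ^ (n - k) ≠ 0 := pow_ne_zero _ hq
  have hsn : (q : RatFunc ℚ) ^ n = q ^ k * q ^ (n - k) := by
    rw [← pow_add]; congr 1; omega
  have hE1 : (1 : RatFunc ℚ) - q * (q ^ k * q ^ (n - k)) ≠ 0 := by
    have := one_sub_q_pow_ne_zero (m := n + 1) (by omega)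
    rwa [pow_succ', hsn] at this
  have hE3 : (1 : RatFunc ℚ) - q ^ 2 * ((q ^ k) ^ 2 * (q ^ (n - k)) ^ 2) ≠ 0 := by
    have := one_sub_q_pow_ne_zero (m := 2 * n + 2) (by omega)
    have hx : (q : RatFunc ℚ) ^ (2 * n + 2) = q ^ 2 * ((q ^ k) ^ 2 * (q ^ (n - k)) ^ 2) := by
      rw [show 2 * n + 2 = 2 * k + 2 * (n - k) + 2 from by omega, q_pow_split k (n - k) 2 2 2]; ring
    rwa [hx] at this
  generalize (q : RatFunc ℚ) ^ k = Y at hY hE1 hE3 ⊢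
  generalize (q : RatFunc ℚ) ^ (n - k) = Z at hZ hE1 hE3 ⊢
  field_simp [hq, hY, hZ, hE1, hE3]
  have hE1' : (1 : RatFunc ℚ) - Y * q * Z ≠ 0 := by rwa [show Y * q * Z = q * (Y * Z) by ring]
  have hE3' : (1 : RatFunc ℚ) - Y ^ 2 * q ^ 2 * Z ^ 2 ≠ 0 := by
    rwa [show Y ^ 2 * q ^ 2 * Z ^ 2 = q ^ 2 * (Y ^ 2 * Z ^ 2) by ring]
  field_simp
  ring

theorem q_staver_wz (n k : ℕ) (hn : 0 < n) (hk : 1 ≤ k) (hkn : k ≤ n) :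
    F2 (n + 1) k - F2 n k = G2 n (k + 1) - G2 n k := by
  rw [e1 n k hk hkn, e0 n k hk hkn, e3 n k hk hkn, e2 n k hk hkn, ← mul_sub, ← mul_sub]
  congr 1
  exact key_id n k hk hkn
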